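/- Let V ∈ M_fd and λ ∈ h*_reg. Writing the universal dynamical fusion matrix as 𝕁(λ) = Σ_{β∈Q⁺} X_β⊗Y_β with X_β∈U⁻[−β] and Y_β∈U⁺[β], one has for all v∈V and f∈V*: ẽ_V( j_{(V,V*)}(λ)(v⊗f) ) = f( q^{2ρ}·ℚ(λ)·v ), where ℚ(λ) := m^{op}((id⊗S^{-1})𝕁(λ)) = Σ_β S^{-1}(Y_β)X_β. Equivalently, the operator ℚ_V(λ) := (ē̃_V(λ)⊗id_V)∘(id_V⊗ι̃_V), with ē̃_V(λ) := ẽ_V∘j_{(V,V*)}(λ), coincides with the action of ℚ(λ) on V. -/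

import Mathlib

/-!  Common framework: graded vector spaces, quantum vertex operators,
dynamical fusion operators (à la Etingof–Varchenko).  -/

noncomputable section
open scoped TensorProduct

namespace EV

/-- A bundled complex vector space. -/
structure Ob where
  car : Type
  [acg : AddCommGroup car]
  [mod : Module ℂ car]

attribute [instance] Ob.acg Ob.mod

/-- A (finite-dimensional) `𝔥^*`-graded complex vector space, recorded by
its (finite) set of weights and the family of weight-space projections. -/
structure WOb (H : Type) [AddCommGroup H] extends Ob where
  supp : Finset H
  wp : H → (car →ₗ[ℂ] car)

variable {H : Type} [AddCommGroup H]

/-- The axioms making the data of a `WOb` a genuine weight decomposition: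
the `wp μ` are mutually orthogonal idempotents supported on `supp` and summing
to the identity, and the space is finite dimensional. -/
def WOb.IsWt [DecidableEq H] (V : WOb H) : Prop :=
  (∀ μ, μ ∉ V.supp → V.wp μ = 0) ∧
  (∀ μ ν, (V.wp μ) ∘ₗ (V.wp ν) = if μ = ν then V.wp μ else 0) ∧
  ((∑ μ ∈ V.supp, V.wp μ) = LinearMap.id) ∧
  FiniteDimensional ℂ V.car

/-- All weights of `V` belong to the weight lattice `Λ`. -/
def WOb.HasWts (V : WOb H) (Λ : AddSubgroup H) : Prop := ∀ μ ∈ V.supp, μ ∈ Λ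

open scoped Pointwise in
/-- Tensor product of graded vector spaces. -/
def WOb.tensW [DecidableEq H] (V W : WOb H) : WOb H where
  car := V.car ⊗[ℂ] W.car
  supp := V.supp + W.supp
  wp := fun μ => ∑ ν ∈ W.supp, TensorProduct.map (V.wp (μ - ν)) (W.wp ν)

/-- The unit object `ℂ_0`. -/
def WOb.unitW (H : Type) [AddCommGroup H] [DecidableEq H] : WOb H where
  car := ℂ
  supp := {0}
  wp := fun μ => if μ = 0 then LinearMap.id else 0

variable [DecidableEq H]

/-- The right-nested tensor product `V₁ ⊗ (V₂ ⊗ (⋯ ⊗ V_k))` of a list of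
graded vector spaces (`F^str`). -/
def tW : List (WOb H) → WOb H
  | [] => WOb.unitW H
  | [V] => V
  | V :: W :: r => V.tensW (tW (W :: r))

/-- `A(λ - h^{(2)}) ⊗ B(λ)` : dynamical tensor product of operators, the
argument of the first leg being shifted by the weight of the second leg. -/
def dynL {X Y : Type} [AddCommGroup X] [Module ℂ X] [AddCommGroup Y] [Module ℂ Y]
    (W W' : WOb H) (A : H → (X →ₗ[ℂ] Y)) (B : W.car →ₗ[ℂ] W'.car) (lam : H) :
    (X ⊗[ℂ] W.car) →ₗ[ℂ] (Y ⊗[ℂ] W'.car) :=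
  ∑ ν ∈ W.supp, TensorProduct.map (A (lam - ν)) (B ∘ₗ W.wp ν)

/-- `A(λ) ⊗ B(λ - h^{(1)})` : dynamical tensor product of operators, the
argument of the second leg being shifted by the weight of the first leg. -/
def dynR {X' Y' : Type} [AddCommGroup X'] [Module ℂ X'] [AddCommGroup Y'] [Module ℂ Y']
    (V : WOb H) {Y : Type} [AddCommGroup Y] [Module ℂ Y]
    (A : V.car →ₗ[ℂ] Y) (B : H → (X' →ₗ[ℂ] Y')) (lam : H) :
    (V.car ⊗[ℂ] X') →ₗ[ℂ] (Y ⊗[ℂ] Y') :=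
  ∑ ν ∈ V.supp, TensorProduct.map (A ∘ₗ V.wp ν) (B (lam - ν))

/-- `q^z := exp(z log q)` for `0 < q < 1`. -/
def qp (q : ℝ) (z : ℂ) : ℂ := Complex.exp (z * Real.log q)

variable [Module ℂ H]

/-- The action of `q^ξ` on a graded vector space (eigenvalue `q^{⟨ξ,σ⟩}` on the
weight space of weight `σ`). -/
def qAct (q : ℝ) (form : H →ₗ[ℂ] H →ₗ[ℂ] ℂ) (ξ : H) (W : WOb H) : W.car →ₗ[ℂ] W.car :=
  ∑ σ ∈ W.supp, qp q (form ξ σ) • W.wp σ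

/-- The action of `κ^n = q^{n Σᵢ xᵢ⊗xᵢ}` on a tensor product of graded spaces. -/
def kapPow (q : ℝ) (form : H →ₗ[ℂ] H →ₗ[ℂ] ℂ) (n : ℤ) (V W : WOb H) :
    (V.car ⊗[ℂ] W.car) →ₗ[ℂ] (V.car ⊗[ℂ] W.car) :=
  ∑ μ ∈ V.supp, ∑ ν ∈ W.supp, qp q ((n : ℂ) * form μ ν) • TensorProduct.map (V.wp μ) (W.wp ν)

/-- The character `χ_W(q^ξ) = Σ_σ dim W[σ] q^{⟨ξ,σ⟩}`. -/
def charW (q : ℝ) (form : H →ₗ[ℂ] H →ₗ[ℂ] ℂ) (ξ : H) (W : WOb H) : ℂ :=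
  ∑ σ ∈ W.supp, qp q (form ξ σ) * (Module.finrank ℂ (LinearMap.range (W.wp σ)) : ℂ)

/-- The Weyl denominator `δ(q^{2λ+2ρ})`. -/
def deltaW (q : ℝ) (form : H →ₗ[ℂ] H →ₗ[ℂ] ℂ) (Pos : Finset H) (rho lam : H) : ℂ :=
  qp q (2 * form (lam + rho) rho) * ∏ α ∈ Pos, (1 - qp q (-(2 * form (lam + rho) α)))

/-- Verma-module data: for each `λ ∈ 𝔥^*` a module `M_λ`, a highest-weight
vector `m_λ`, the dual functional `m_λ^*`, together with an (abstract)
predicate singling out the `U_q(𝔤)`-intertwiners `M_λ → M_{λ-ν} ⊗ V`. -/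
structure VermaData (H : Type) [AddCommGroup H] where
  M : H → Ob
  hw : ∀ lam, (M lam).car
  hwd : ∀ lam, (M lam).car →ₗ[ℂ] ℂ
  IsInt : (lam nu : H) → (V : Ob) →
    (((M lam).car) →ₗ[ℂ] ((M (lam - nu)).car ⊗[ℂ] V.car)) → Prop

/-- The expectation value `⟨f⟩ = (m^*_{λ-ν} ⊗ id)(f(m_λ))`. -/
def VermaData.ev (D : VermaData H) {lam nu : H} {V : Type} [AddCommGroup V] [Module ℂ V]
    (f : (D.M lam).car →ₗ[ℂ] ((D.M (lam - nu)).car ⊗[ℂ] V)) : V :=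
  TensorProduct.lid ℂ V ((TensorProduct.map (D.hwd (lam - nu)) LinearMap.id) (f (D.hw lam)))

/-- The quantum vertex operators `φ_λ^v : M_λ → M_{λ-ν} ⊗ V`, `v ∈ V[ν]`. -/
structure PhiData (H : Type) [AddCommGroup H] (D : VermaData H) where
  phi : (lam : H) → (V : WOb H) → (nu : H) →
    V.car →ₗ[ℂ] ((D.M lam).car →ₗ[ℂ] ((D.M (lam - nu)).car ⊗[ℂ] V.car))

/-- The defining properties of quantum vertex operators: for `λ ∈ 𝔥^*_reg` and
`v ∈ V[ν]`, `φ_λ^v` is the unique intertwiner `M_λ → M_{λ-ν} ⊗ V` with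
expectation value `v`. -/
structure PhiAxioms (hreg : Set H) (D : VermaData H) (P : PhiData H D) : Prop where
  ev_phi : ∀ lam ∈ hreg, ∀ (V : WOb H) (nu : H) (v : V.car), V.wp nu v = v →
    D.ev (P.phi lam V nu v) = v
  int_phi : ∀ lam ∈ hreg, ∀ (V : WOb H) (nu : H) (v : V.car), V.wp nu v = v →
    D.IsInt lam nu V.toOb (P.phi lam V nu v)
  uniq : ∀ lam ∈ hreg, ∀ (V : WOb H) (nu : H)
      (ψ : (D.M lam).car →ₗ[ℂ] ((D.M (lam - nu)).car ⊗[ℂ] V.car)),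
      D.IsInt lam nu V.toOb ψ → V.wp nu (D.ev ψ) = D.ev ψ →
      ψ = P.phi lam V nu (D.ev ψ)

/-- Cast between the underlying spaces of Verma modules with equal highest weights. -/
def Dcast (D : VermaData H) {a b : H} (h : a = b) : (D.M a).car ≃ₗ[ℂ] (D.M b).car := by
  subst h; exact LinearEquiv.refl ℂ _

/-- Cast between multi-tensor products of equal lists. -/
def tcastL {S T : List (WOb H)} (h : S = T) : (tW S).car ≃ₗ[ℂ] (tW T).car := by
  subst h; exact LinearEquiv.refl ℂ _

/-- A graded vector space together with a chosen weight and weight vector. -/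
structure WVec (H : Type) [AddCommGroup H] where
  V : WOb H
  nu : H
  v : V.car

/-- total weight of a list of weight vectors -/
def wtsum (l : List (WVec H)) : H := (l.map WVec.nu).sum

/-- The elementary tensor `v₁ ⊗ (v₂ ⊗ (⋯ ⊗ v_k))`. -/
def tvec : (l : List (WVec H)) → (tW (l.map WVec.V)).car
  | [] => (1 : ℂ)
  | [x] => x.v
  | x :: y :: r => x.v ⊗ₜ[ℂ] tvec (y :: r)

/-- A list of weight vectors is homogeneous. -/
def Homog (l : List (WVec H)) : Prop := ∀ x ∈ l, x.V.wp x.nu x.v = x.v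

/-- The `k`-point quantum vertex operator
`φ_λ^{v₁,…,v_k} = (φ^{v₁} ⊗ id) ∘ ⋯ ∘ φ_λ^{v_k} : M_λ → M_{λ-Σνᵢ} ⊗ (V₁⊗⋯⊗V_k)`. -/
def kphi (D : VermaData H) (P : PhiData H D) :
    (l : List (WVec H)) → (lam : H) →
    ((D.M lam).car →ₗ[ℂ] ((D.M (lam - wtsum l)).car ⊗[ℂ] (tW (l.map WVec.V)).car))
  | [], lam =>
      (TensorProduct.map (Dcast D (show lam = lam - wtsum ([] : List (WVec H)) by
          simp [wtsum])).toLinearMap LinearMap.id) ∘ₗ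
        (TensorProduct.rid ℂ (D.M lam).car).symm.toLinearMap
  | [x], lam =>
      (TensorProduct.map (Dcast D (show lam - x.nu = lam - wtsum [x] by
          simp [wtsum])).toLinearMap LinearMap.id) ∘ₗ (P.phi lam x.V x.nu x.v)
  | x :: y :: r, lam =>
      (TensorProduct.assoc ℂ _ _ _).toLinearMap ∘ₗ
      (TensorProduct.map
        ((TensorProduct.map (Dcast D (show lam - wtsum (y :: r) - x.nu
              = lam - wtsum (x :: y :: r) by
            simp only [wtsum, List.map_cons, List.sum_cons]; abel)).toLinearMap
          LinearMap.id) ∘ₗ (P.phi (lam - wtsum (y :: r)) x.V x.nu x.v))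
        (LinearMap.id : (tW ((y :: r).map WVec.V)).car →ₗ[ℂ] (tW ((y :: r).map WVec.V)).car)) ∘ₗ
      (kphi D P (y :: r) lam)

/-- Dynamical fusion operators `j_S(λ)` (and their inverses) on the
multi-tensor products `F^str(S)`. -/
structure FusionData (H : Type) [AddCommGroup H] [DecidableEq H] (D : VermaData H) where
  jf : (S : List (WOb H)) → H → ((tW S).car →ₗ[ℂ] (tW S).car)
  jfInv : (S : List (WOb H)) → H → ((tW S).car →ₗ[ℂ] (tW S).car)

/-- The defining properties of the dynamical fusion operators: they are the
expectation values (highest-weight coefficients) of the multi-point quantum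
vertex operators, they are invertible, and trivial on singletons. -/
structure FusionAxioms (hreg : Set H) (D : VermaData H) (P : PhiData H D)
    (F : FusionData H D) : Prop where
  jf_char : ∀ (l : List (WVec H)), Homog l → ∀ lam ∈ hreg,
    F.jf (l.map WVec.V) lam (tvec l) = D.ev (kphi D P l lam)
  jf_inv : ∀ (S : List (WOb H)) (lam : H),
    F.jf S lam ∘ₗ F.jfInv S lam = LinearMap.id ∧
    F.jfInv S lam ∘ₗ F.jf S lam = LinearMap.id
  jf_single : ∀ (V : WOb H) (lam : H), F.jf [V] lam = LinearMap.id
  jf_empty : ∀ lam : H, F.jf [] lam = LinearMap.id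

end EV
namespace EV

variable {H : Type} [AddCommGroup H] [DecidableEq H]

/-- The canonical identification `F^str(S ++ T) ≃ F^str(S) ⊗ F^str(T)`
built from the associativity and unit constraints. -/
def sigEquiv : (S T : List (WOb H)) → ((tW (S ++ T)).car ≃ₗ[ℂ] ((tW S).car ⊗[ℂ] (tW T).car))
  | [], T => (TensorProduct.lid ℂ (tW T).car).symm
  | [V], [] => (TensorProduct.rid ℂ V.car).symm
  | [V], (W :: T) => LinearEquiv.refl ℂ _
  | (V :: V' :: S), T =>
      (TensorProduct.congr (LinearEquiv.refl ℂ V.car) (sigEquiv (V' :: S) T)).trans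
        (TensorProduct.assoc ℂ V.car (tW (V' :: S)).car (tW T).car).symm

end EV
namespace EV

variable {H : Type} [AddCommGroup H] [DecidableEq H]

/-- The dual graded vector space `V^*` (with `V^*[μ]` dual to `V[-μ]`). -/
def dualW (V : WOb H) : WOb H where
  car := Module.Dual ℂ V.car
  supp := V.supp.image (fun μ => -μ)
  wp := fun μ => (V.wp (-μ)).dualMap

end EV
namespace EV

lemma list_sum_apply' {M N : Type} [AddCommGroup M] [Module ℂ M] [AddCommGroup N]
    [Module ℂ N] (l : List (M →ₗ[ℂ] N)) (x : M) :
    l.sum x = (l.map (fun g => g x)).sum := by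
  induction l with
  | nil => simp
  | cons a t ih => simp [ih]

lemma qp_neg_mul (q : ℝ) (a : ℂ) : qp q (-a) * qp q a = 1 := by
  rw [qp, qp, ← Complex.exp_add]
  ring_nf
  exact Complex.exp_zero

lemma qAct_neg_comp {H : Type} [AddCommGroup H] [DecidableEq H] [Module ℂ H]
    (q : ℝ) (form : H →ₗ[ℂ] H →ₗ[ℂ] ℂ) (ξ : H) (V : WOb H) (hV : V.IsWt) :
    qAct q form (-ξ) V ∘ₗ qAct q form ξ V = LinearMap.id := by
  obtain ⟨h0, horth, hsum, _⟩ := hV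
  have horth' : ∀ μ ν y, V.wp μ (V.wp ν y) = if μ = ν then V.wp μ y else 0 := by
    intro μ ν y
    have h := congrArg (fun g : V.car →ₗ[ℂ] V.car => g y) (horth μ ν)
    simp only [LinearMap.coe_comp, Function.comp_apply] at h
    rw [h]; split_ifs <;> simp
  have hsum' : ∀ y, (∑ μ ∈ V.supp, V.wp μ y) = y := by
    intro y
    have h := congrArg (fun g : V.car →ₗ[ℂ] V.car => g y) hsum
    simpa using h
  apply LinearMap.ext; intro x
  unfold qAct
  simp only [LinearMap.coe_comp, Function.comp_apply, LinearMap.sum_apply,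
    LinearMap.smul_apply, map_sum, map_smul, LinearMap.id_apply]
  have step : ∀ τ ∈ V.supp,
      qp q (form ξ τ) • ∑ σ ∈ V.supp, qp q (form (-ξ) σ) • V.wp σ (V.wp τ x)
        = V.wp τ x := by
    intro τ hτ
    have : (∑ σ ∈ V.supp, qp q (form (-ξ) σ) • V.wp σ (V.wp τ x))
        = qp q (form (-ξ) τ) • V.wp τ x := by
      rw [Finset.sum_eq_single τ]
      · rw [horth', if_pos rfl]
      · intro σ _ hσ; rw [horth', if_neg hσ, smul_zero]
      · intro h; exact absurd hτ h
    rw [this, smul_smul, map_neg, LinearMap.neg_apply, mul_comm, qp_neg_mul, one_smul]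
  rw [Finset.sum_congr rfl step, hsum']

/-- the operator `ℚ(λ)`.  Writing the universal dynamical
fusion matrix as `𝕁(λ) = Σ_{β∈Q⁺} X_β ⊗ Y_β` (here: a family of finite lists
of pure tensors `Jβ λ β`, with `X_β ∈ U⁻[-β]`, `Y_β ∈ U⁺[β]`, whose action on
`V ⊗ V^*` sums to `j_{(V,V^*)}(λ)`), one has for all `v ∈ V`, `f ∈ V^*`:
`ẽ_V(j_{(V,V^*)}(λ)(v ⊗ f)) = f(q^{2ρ} ⬝ ℚ(λ) ⬝ v)` where
`ℚ(λ) = m^{op}((id ⊗ S⁻¹)𝕁(λ)) = Σ_β S⁻¹(Y_β) X_β`; equivalently the operator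
`ℚ_V(λ) = (ē̃_V(λ) ⊗ id_V) ∘ (id_V ⊗ ι̃_V)`, with `ē̃_V(λ) = ẽ_V ∘ j_{(V,V^*)}(λ)`,
coincides with the action of `ℚ(λ)` on `V`. -/
theorem statement7
    {H : Type} [AddCommGroup H] [DecidableEq H] [Module ℂ H]
    (Λ : AddSubgroup H) (hreg : Set H)
    (hstab : ∀ lam ∈ hreg, ∀ ν ∈ Λ, lam - ν ∈ hreg)
    (q : ℝ) (hq : 0 < q ∧ q < 1)
    (form : H →ₗ[ℂ] H →ₗ[ℂ] ℂ) (hsymm : ∀ a b, form a b = form b a)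
    (rho : H)
    (D : VermaData H) (P : PhiData H D) (hP : PhiAxioms hreg D P)
    (F : FusionData H D) (hF : FusionAxioms hreg D P F)
    -- the quantized universal enveloping algebra with its antipode
    (U : Type) [Ring U] [Algebra ℂ U]
    (antip antipInv : U →ₗ[ℂ] U)
    (hanti : ∀ u, antip (antipInv u) = u ∧ antipInv (antip u) = u)
    (hantihom : ∀ u u' : U, antip (u * u') = antip u' * antip u)
    -- the module `V` and the action of `U_q(𝔤)` on it
    (V : WOb H) (hVwt : V.IsWt) (hVΛ : V.HasWts Λ)
    (n : ℕ) (bV : Module.Basis (Fin n) ℂ V.car)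
    (ρV : U →ₐ[ℂ] Module.End ℂ V.car)
    -- `S²(X) = q^{2ρ} X q^{-2ρ}`
    (hS2 : ∀ u : U, qAct q form (2 • rho) V ∘ₗ (ρV u : V.car →ₗ[ℂ] V.car)
      = (ρV (antip (antip u)) : V.car →ₗ[ℂ] V.car) ∘ₗ qAct q form (2 • rho) V)
    -- the components `𝕁_β(λ) = Σ X_β ⊗ Y_β` of the universal fusion matrix
    (Jβ : H → H → List (U × U))
    (hJ0 : ∀ lam, Jβ lam 0 = [(1, 1)])
    -- triangularity: `X_β ∈ U⁻[-β]` lowers weights by `β`, `Y_β ∈ U⁺[β]` raises them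
    (hJwt : ∀ lam β, ∀ p ∈ Jβ lam β, ∀ ν : H,
      ((ρV p.1 : V.car →ₗ[ℂ] V.car) ∘ₗ V.wp ν = V.wp (ν - β) ∘ₗ (ρV p.1 : V.car →ₗ[ℂ] V.car)) ∧
      ((ρV p.2 : V.car →ₗ[ℂ] V.car) ∘ₗ V.wp ν = V.wp (ν + β) ∘ₗ (ρV p.2 : V.car →ₗ[ℂ] V.car)))
    (lam : H) (hlam : lam ∈ hreg)
    -- the action of `𝕁(λ)` on `V ⊗ V^*` is `j_{(V,V^*)}(λ)` (a finite sum)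
    (Fs : Finset H)
    (hJact : (∀ β ∉ Fs,
        ((Jβ lam β).map (fun p => TensorProduct.map
          (ρV p.1 : V.car →ₗ[ℂ] V.car)
          ((ρV (antip p.2) : V.car →ₗ[ℂ] V.car).dualMap))).sum = 0) ∧
      (∑ β ∈ Fs, ((Jβ lam β).map (fun p => TensorProduct.map
          (ρV p.1 : V.car →ₗ[ℂ] V.car)
          ((ρV (antip p.2) : V.car →ₗ[ℂ] V.car).dualMap))).sum
        = F.jf [V, dualW V] lam)) :
    -- `ẽ_V(v ⊗ f) := f(q^{2ρ} v)`
    (letI etilde : (V.car ⊗[ℂ] (dualW V).car) →ₗ[ℂ] ℂ :=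
      TensorProduct.lift
        ((LinearMap.id : Module.Dual ℂ V.car →ₗ[ℂ] (V.car →ₗ[ℂ] ℂ)).flip ∘ₗ
          qAct q form (2 • rho) V)
     -- the action of `ℚ(λ) = Σ_β S⁻¹(Y_β) X_β` on `V`
     letI Qact : V.car →ₗ[ℂ] V.car :=
       ∑ β ∈ Fs, ((Jβ lam β).map (fun p => (ρV (antipInv p.2 * p.1) : V.car →ₗ[ℂ] V.car))).sum
     -- `ι̃_V(1) = Σ_b b^* ⊗ q^{-2ρ} b`
     letI iotavec : (dualW V).car ⊗[ℂ] V.car :=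
       ∑ i, (bV.coord i) ⊗ₜ[ℂ] (qAct q form (-(2 • rho)) V (bV i))
     -- `ℚ_V(λ) = (ē̃_V(λ) ⊗ id_V) ∘ (id_V ⊗ ι̃_V)`
     letI Qop : V.car →ₗ[ℂ] V.car :=
       (TensorProduct.lid ℂ V.car).toLinearMap ∘ₗ
         TensorProduct.map (etilde ∘ₗ F.jf [V, dualW V] lam) LinearMap.id ∘ₗ
         (TensorProduct.assoc ℂ V.car (dualW V).car V.car).symm.toLinearMap ∘ₗ
         (TensorProduct.mk ℂ V.car ((dualW V).car ⊗[ℂ] V.car)).flip iotavec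
     -- the two assertions
     (∀ (v : V.car) (f : Module.Dual ℂ V.car),
        etilde (F.jf [V, dualW V] lam (v ⊗ₜ[ℂ] f))
          = f (qAct q form (2 • rho) V (Qact v)))
     ∧ Qop = Qact) := by
  classical
  set S2 := qAct q form (2 • rho) V with hS2def
  set Sneg := qAct q form (-(2 • rho)) V with hSnegdef
  set et : (V.car ⊗[ℂ] (dualW V).car) →ₗ[ℂ] ℂ :=
    TensorProduct.lift
      ((LinearMap.id : Module.Dual ℂ V.car →ₗ[ℂ] (V.car →ₗ[ℂ] ℂ)).flip ∘ₗ S2) with hetdef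
  set Qact : V.car →ₗ[ℂ] V.car :=
    ∑ β ∈ Fs, ((Jβ lam β).map
      (fun p => (ρV (antipInv p.2 * p.1) : V.car →ₗ[ℂ] V.car))).sum with hQdef
  -- the key commutation `S(Y) q^{2ρ} = q^{2ρ} S⁻¹(Y)`
  have hcomm : ∀ (u : U) (x : V.car),
      (ρV (antip u) : V.car →ₗ[ℂ] V.car) (S2 x)
        = S2 ((ρV (antipInv u) : V.car →ₗ[ℂ] V.car) x) := by
    intro u x
    have h := congrArg (fun g : V.car →ₗ[ℂ] V.car => g x) (hS2 (antipInv u))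
    simp only [LinearMap.coe_comp, Function.comp_apply] at h
    rw [(hanti u).1] at h
    exact h.symm
  have het : ∀ (x : V.car) (φ : Module.Dual ℂ V.car), et (x ⊗ₜ[ℂ] φ) = φ (S2 x) := by
    intro x φ
    rfl
  set et' : (V.car ⊗[ℂ] Module.Dual ℂ V.car) →ₗ[ℂ] ℂ :=
    TensorProduct.lift
      ((LinearMap.id : Module.Dual ℂ V.car →ₗ[ℂ] (V.car →ₗ[ℂ] ℂ)).flip ∘ₗ S2) with het'def
  have het' : ∀ (x : V.car) (φ : Module.Dual ℂ V.car), et' (x ⊗ₜ[ℂ] φ) = φ (S2 x) := by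
    intro x φ
    rfl
  -- the first assertion
  have hmain : ∀ (v : V.car) (f : Module.Dual ℂ V.car),
      et (F.jf [V, dualW V] lam (v ⊗ₜ[ℂ] f)) = f (S2 (Qact v)) := by
    intro v f
    have happ : F.jf [V, dualW V] lam (v ⊗ₜ[ℂ] f)
        = ∑ β ∈ Fs, (((Jβ lam β).map (fun p => TensorProduct.map
            (ρV p.1 : V.car →ₗ[ℂ] V.car)
            ((ρV (antip p.2) : V.car →ₗ[ℂ] V.car).dualMap))).sum (v ⊗ₜ[ℂ] f)) := by
      have h := congrArg (fun g => g (v ⊗ₜ[ℂ] f)) hJact.2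
      rw [LinearMap.sum_apply] at h
      exact h.symm
    rw [happ]
    show et' _ = _
    rw [hQdef, LinearMap.sum_apply, map_sum]
    simp only [map_sum, list_sum_apply', map_list_sum, List.map_map]
    refine Finset.sum_congr rfl (fun β _ => ?_)
    refine congrArg List.sum (List.map_congr_left (fun p _ => ?_))
    simp only [Function.comp_apply, TensorProduct.map_tmul, het',
      LinearMap.dualMap_apply, map_mul]
    congr 1
    have hmm : (ρV (antipInv p.2) * ρV p.1 : Module.End ℂ V.car) v
        = (ρV (antipInv p.2) : V.car →ₗ[ℂ] V.car) ((ρV p.1 : V.car →ₗ[ℂ] V.car) v) :=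
      rfl
    rw [hmm, ← hcomm]
  refine ⟨hmain, ?_⟩
  -- the second assertion
  apply LinearMap.ext; intro v
  show (TensorProduct.lid ℂ V.car) (TensorProduct.map (et ∘ₗ (show (V.car ⊗[ℂ] (dualW V).car) →ₗ[ℂ] (V.car ⊗[ℂ] (dualW V).car) from
      F.jf [V, dualW V] lam)) LinearMap.id
    ((TensorProduct.assoc ℂ V.car (dualW V).car V.car).symm
      (v ⊗ₜ[ℂ] ∑ i, (bV.coord i : (dualW V).car) ⊗ₜ[ℂ] Sneg (bV i)))) = Qact v
  simp only [LinearMap.sum_apply, LinearMap.coe_comp, Function.comp_apply, LinearEquiv.coe_coe,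
    LinearEquiv.coe_toLinearMap,
    LinearMap.flip_apply, TensorProduct.mk_apply, TensorProduct.tmul_sum, map_sum,
    TensorProduct.assoc_symm_tmul, TensorProduct.map_tmul, TensorProduct.lid_tmul,
    LinearMap.id_coe, id_eq]
  trans (∑ i : Fin n, Sneg ((bV.repr (S2 (Qact v)) i) • bV i))
  · refine Finset.sum_congr rfl (fun i _ => ?_)
    show et (F.jf [V, dualW V] lam (v ⊗ₜ[ℂ] bV.coord i)) • Sneg (bV i) = _
    rw [hmain v (bV.coord i), Module.Basis.coord_apply, map_smul]
  · rw [← map_sum, Module.Basis.sum_repr]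
    have h := congrArg (fun g : V.car →ₗ[ℂ] V.car => g (Qact v))
      (qAct_neg_comp q form (2 • rho) V hVwt)
    simpa using h

end EV
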